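/- Let M = (M_i)_{i∈I} be a POVM on ℂ^d and let ρ, σ be quantum states with (1/2)‖ρ − σ‖₁ ≤ ε. Then |S_M(ρ) − S_M(σ)| ≤ g(ε) + ε·log d. -/

import Mathlib

open scoped BigOperators ComplexOrder Classical

noncomputable section

/-- Shannon entropy of a finitely supported distribution, with `0 log 0 = 0`. -/
def shannonEntropy {ι : Type*} [Fintype ι] (p : ι → ℝ) : ℝ :=
  -∑ i, p i * Real.log (p i)

/-- A quantum state: positive semidefinite with unit trace. -/
def IsState {n : Type*} [Fintype n] (ρ : Matrix n n ℂ) : Prop :=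
  ρ.PosSemidef ∧ ρ.trace = 1

/-- A POVM: positive semidefinite elements summing to the identity. -/
def IsPOVM {ι n : Type*} [Fintype ι] [Fintype n] [DecidableEq n]
    (M : ι → Matrix n n ℂ) : Prop :=
  (∀ i, (M i).PosSemidef) ∧ ∑ i, M i = 1

/-- Observational entropy `S_M(ρ) = -∑ p_i log (p_i / V_i)`. -/
def obsEntropy {ι n : Type*} [Fintype ι] [Fintype n]
    (M : ι → Matrix n n ℂ) (ρ : Matrix n n ℂ) : ℝ :=
  -∑ i, ((M i * ρ).trace.re * Real.log ((M i * ρ).trace.re / (M i).trace.re))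

/-- The function `g(x) = -x log x + (1+x) log(1+x)`. -/
def gFun (x : ℝ) : ℝ := -(x * Real.log x) + (1 + x) * Real.log (1 + x)

/-- Trace norm of a square complex matrix. -/
def traceNorm {n : Type*} [Fintype n] [DecidableEq n] (X : Matrix n n ℂ) : ℝ :=
  (((Matrix.posSemidef_conjTranspose_mul_self X).1.eigenvectorUnitary : Matrix n n ℂ) *
    Matrix.diagonal (((↑) : ℝ → ℂ) ∘ (√·) ∘ (Matrix.posSemidef_conjTranspose_mul_self X).1.eigenvalues) *
    (star (Matrix.posSemidef_conjTranspose_mul_self X).1.eigenvectorUnitary : Matrix n n ℂ)).trace.re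

/-- Matrix logarithm of a Hermitian matrix via the spectral decomposition,
with the convention `log 0 = 0` on the kernel; junk value `0` on non-Hermitian input. -/
def matLog {n : Type*} [Fintype n] [DecidableEq n] (A : Matrix n n ℂ) : Matrix n n ℂ :=
  if hA : A.IsHermitian then
    (hA.eigenvectorUnitary : Matrix n n ℂ) *
      Matrix.diagonal (fun i => (Real.log (hA.eigenvalues i) : ℂ)) *
      (star (hA.eigenvectorUnitary : Matrix n n ℂ))
  else 0

/-- Von Neumann entropy `S(ρ) = -tr(ρ log ρ)`. -/
def vnEntropy {n : Type*} [Fintype n] [DecidableEq n] (ρ : Matrix n n ℂ) : ℝ :=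
  -((ρ * matLog ρ).trace.re)

/-- Quantum relative entropy, as an extended real number: `tr(μ (log μ - log ν))` when
`supp μ ⊆ supp ν` (both Hermitian), and `+∞` otherwise. -/
def qRelEntropy {n : Type*} [Fintype n] [DecidableEq n] (μ ν : Matrix n n ℂ) : EReal :=
  if μ.IsHermitian ∧ ν.IsHermitian ∧
      LinearMap.range (Matrix.toLin' μ) ≤ LinearMap.range (Matrix.toLin' ν) then
    (((μ * (matLog μ - matLog ν)).trace.re : ℝ) : EReal)
  else ⊤

/-- Real-valued quantum relative entropy `tr(μ (log μ - log ν))` (meaningful when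
`supp μ ⊆ supp ν`). -/
def qRelEntropyR {n : Type*} [Fintype n] [DecidableEq n] (μ ν : Matrix n n ℂ) : ℝ :=
  (μ * (matLog μ - matLog ν)).trace.re



section Helpers
open Matrix
variable {n : Type*} [Fintype n] [DecidableEq n]


lemma psd_trace_nonneg {A : Matrix n n ℂ} (hA : A.PosSemidef) : 0 ≤ A.trace.re := by
  have h : ∀ i, 0 ≤ (A i i).re := by
    intro i
    have := hA.re_dotProduct_nonneg (Pi.single i 1)
    simpa [dotProduct, mulVec, Pi.single_apply, Finset.sum_ite_eq] using this
  have : (0:ℝ) ≤ ∑ i, (A i i).re := Finset.sum_nonneg fun i _ => h i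
  simpa [Matrix.trace, Matrix.diag, Complex.re_sum] using this

lemma psd_diag_re_nonneg {A : Matrix n n ℂ} (hA : A.PosSemidef) (i : n) : 0 ≤ (A i i).re := by
  have := hA.re_dotProduct_nonneg (Pi.single i 1)
  simpa [dotProduct, mulVec, Pi.single_apply, Finset.sum_ite_eq] using this

lemma psd_diag_re_le_trace {A : Matrix n n ℂ} (hA : A.PosSemidef) (i : n) :
    (A i i).re ≤ A.trace.re := by
  have : A.trace.re = ∑ j, (A j j).re := by simp [Matrix.trace, Matrix.diag, Complex.re_sum]
  rw [this]
  exact Finset.single_le_sum (fun j _ => psd_diag_re_nonneg hA j) (Finset.mem_univ i)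

open scoped MatrixOrder in
lemma psd_trace_mul_nonneg {A B : Matrix n n ℂ} (hA : A.PosSemidef) (hB : B.PosSemidef) :
    0 ≤ (A * B).trace.re := by
  have hs := (CFC.sqrt_nonneg A).posSemidef
  have h1 : A * B = CFC.sqrt A * CFC.sqrt A * B := by rw [CFC.sqrt_mul_sqrt_self A hA.nonneg]
  have h2 : (CFC.sqrt A * CFC.sqrt A * B).trace = (CFC.sqrt A * B * CFC.sqrt A).trace :=
    (Matrix.trace_mul_cycle (CFC.sqrt A) B (CFC.sqrt A)).symm
  have hpsd : (CFC.sqrt A * B * CFC.sqrt A).PosSemidef := by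
    have := hB.mul_mul_conjTranspose_same (CFC.sqrt A)
    rwa [hs.isHermitian.eq] at this
  rw [h1, h2]
  exact psd_trace_nonneg hpsd

lemma trace_unitary_conj {A : Matrix n n ℂ} (hA : A.IsHermitian) (X : Matrix n n ℂ) :
    ((hA.eigenvectorUnitary : Matrix n n ℂ) * X * (star (hA.eigenvectorUnitary : Matrix n n ℂ))).trace
      = X.trace := by
  rw [Matrix.trace_mul_cycle,
    Matrix.mem_unitaryGroup_iff'.mp (hA.eigenvectorUnitary).2, Matrix.one_mul]

lemma trace_unitary_conj' {A : Matrix n n ℂ} (hA : A.IsHermitian) (X : Matrix n n ℂ) :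
    ((star (hA.eigenvectorUnitary : Matrix n n ℂ)) * X * (hA.eigenvectorUnitary : Matrix n n ℂ)).trace
      = X.trace := by
  rw [Matrix.trace_mul_cycle,
    Matrix.mem_unitaryGroup_iff.mp (hA.eigenvectorUnitary).2, Matrix.one_mul]

lemma psd_trace_mul_le {A B : Matrix n n ℂ} (hA : A.PosSemidef) (hB : B.PosSemidef) :
    (A * B).trace.re ≤ A.trace.re * B.trace.re := by
  set U : Matrix n n ℂ := (hA.1.eigenvectorUnitary : Matrix n n ℂ) with hU
  set D : Matrix n n ℂ := Matrix.diagonal (RCLike.ofReal ∘ hA.1.eigenvalues) with hD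
  have hspec : A = U * D * star U := hA.1.spectral_theorem
  set C : Matrix n n ℂ := star U * B * U with hC
  have hCpsd : C.PosSemidef := by
    have := hB.conjTranspose_mul_mul_same U
    rwa [← Matrix.star_eq_conjTranspose] at this
  have htrC : C.trace = B.trace := trace_unitary_conj' hA.1 B
  have h1 : (A * B).trace = (D * C).trace := by
    rw [hspec]
    calc (U * D * star U * B).trace = ((U * D) * (star U * B)).trace := by
          rw [Matrix.mul_assoc]
        _ = ((star U * B) * (U * D)).trace := Matrix.trace_mul_comm _ _
        _ = ((star U * B * U) * D).trace := by
          simp only [Matrix.mul_assoc]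
        _ = (D * C).trace := Matrix.trace_mul_comm _ _
  have h2 : (D * C).trace.re = ∑ i, hA.1.eigenvalues i * (C i i).re := by
    simp [Matrix.trace, Matrix.diag, Matrix.diagonal_mul, Complex.re_sum, Complex.mul_re, hD]
  have h3 : ∀ i, hA.1.eigenvalues i * (C i i).re ≤ hA.1.eigenvalues i * B.trace.re := by
    intro i
    apply mul_le_mul_of_nonneg_left _ (hA.eigenvalues_nonneg i)
    rw [← htrC]
    exact psd_diag_re_le_trace hCpsd i
  have h4 : A.trace.re = ∑ i, hA.1.eigenvalues i := by
    have : A.trace = D.trace := by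
      conv_lhs => rw [hspec]
      exact trace_unitary_conj hA.1 D
    rw [this]
    simp [Matrix.trace, Matrix.diag, Complex.re_sum, hD]
  calc (A * B).trace.re = ∑ i, hA.1.eigenvalues i * (C i i).re := by rw [h1, h2]
    _ ≤ ∑ i, hA.1.eigenvalues i * B.trace.re := Finset.sum_le_sum (fun i _ => h3 i)
    _ = A.trace.re * B.trace.re := by rw [← Finset.sum_mul, h4]


lemma conj_psd {A : Matrix n n ℂ} (hA : A.IsHermitian) (f : n → ℝ) (hf : ∀ i, 0 ≤ f i) :
    ((hA.eigenvectorUnitary : Matrix n n ℂ) * Matrix.diagonal (fun i => (f i : ℂ)) *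
      star (hA.eigenvectorUnitary : Matrix n n ℂ)).PosSemidef := by
  have hd : (Matrix.diagonal (fun i => (f i : ℂ))).PosSemidef :=
    Matrix.posSemidef_diagonal_iff.mpr fun i => Complex.zero_le_real.mpr (hf i)
  have := hd.mul_mul_conjTranspose_same (hA.eigenvectorUnitary : Matrix n n ℂ)
  rwa [← Matrix.star_eq_conjTranspose] at this

lemma conj_mul_conj {A : Matrix n n ℂ} (hA : A.IsHermitian) (f g : n → ℝ) :
    ((hA.eigenvectorUnitary : Matrix n n ℂ) * Matrix.diagonal (fun i => (f i : ℂ)) *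
      star (hA.eigenvectorUnitary : Matrix n n ℂ)) *
    ((hA.eigenvectorUnitary : Matrix n n ℂ) * Matrix.diagonal (fun i => (g i : ℂ)) *
      star (hA.eigenvectorUnitary : Matrix n n ℂ)) =
    (hA.eigenvectorUnitary : Matrix n n ℂ) * Matrix.diagonal (fun i => ((f i * g i : ℝ) : ℂ)) *
      star (hA.eigenvectorUnitary : Matrix n n ℂ) := by
  set U : Matrix n n ℂ := (hA.eigenvectorUnitary : Matrix n n ℂ)
  have h1 : star U * U = 1 := Matrix.mem_unitaryGroup_iff'.mp (hA.eigenvectorUnitary).2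
  calc (U * Matrix.diagonal (fun i => (f i : ℂ)) * star U) *
        (U * Matrix.diagonal (fun i => (g i : ℂ)) * star U)
      = U * (Matrix.diagonal (fun i => (f i : ℂ)) * ((star U * U) *
          (Matrix.diagonal (fun i => (g i : ℂ)) * star U))) := by
        simp only [Matrix.mul_assoc]
    _ = U * Matrix.diagonal (fun i => ((f i * g i : ℝ) : ℂ)) * star U := by
        rw [h1, Matrix.one_mul, ← Matrix.mul_assoc (Matrix.diagonal _),
          ← Matrix.mul_assoc, Matrix.diagonal_mul_diagonal]
        norm_cast

lemma conj_trace {A : Matrix n n ℂ} (hA : A.IsHermitian) (f : n → ℝ) :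
    ((hA.eigenvectorUnitary : Matrix n n ℂ) * Matrix.diagonal (fun i => (f i : ℂ)) *
      star (hA.eigenvectorUnitary : Matrix n n ℂ)).trace = ∑ i, (f i : ℂ) := by
  rw [trace_unitary_conj hA, Matrix.trace_diagonal]

lemma jordan_decomp {X : Matrix n n ℂ} (hX : X.IsHermitian) :
    ∃ P N : Matrix n n ℂ, P.PosSemidef ∧ N.PosSemidef ∧ X = P - N ∧
      P.trace.re + N.trace.re = traceNorm X ∧ P.trace.re - N.trace.re = X.trace.re := by
  set U : Matrix n n ℂ := (hX.eigenvectorUnitary : Matrix n n ℂ) with hU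
  set lam := hX.eigenvalues with hlam
  have hspec : X = U * Matrix.diagonal (fun i => ((lam i : ℝ) : ℂ)) * star U := by
    have := hX.spectral_theorem
    exact this
  refine ⟨U * Matrix.diagonal (fun i => ((max (lam i) 0 : ℝ) : ℂ)) * star U,
          U * Matrix.diagonal (fun i => ((max (-lam i) 0 : ℝ) : ℂ)) * star U,
          conj_psd hX _ (fun i => le_max_right _ _),
          conj_psd hX _ (fun i => le_max_right _ _), ?_, ?_, ?_⟩
  · rw [← Matrix.sub_mul, ← Matrix.mul_sub, Matrix.diagonal_sub]
    have hfun : (fun i => ((max (lam i) 0 : ℝ) : ℂ) - ((max (-lam i) 0 : ℝ) : ℂ)) =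
        fun i => ((lam i : ℝ) : ℂ) := by
      funext i
      rw [← Complex.ofReal_sub, max_zero_sub_max_neg_zero_eq_self]
    rw [hfun]
    exact hspec
  · have hS : ((U * Matrix.diagonal (fun i => ((|lam i| : ℝ) : ℂ)) * star U)) =
        cfc Real.sqrt (Xᴴ * X) := by
      have hXX : Xᴴ * X = cfc (fun x : ℝ => x ^ 2) X := by
        rw [cfc_pow_id X 2 hX.isSelfAdjoint, hX.eq, pow_two]
      rw [hXX, ← cfc_comp Real.sqrt (fun x : ℝ => x ^ 2) X, hX.cfc_eq]
      have hfun : (Real.sqrt ∘ fun x : ℝ => x ^ 2) = fun x => |x| := by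
        funext x
        exact Real.sqrt_sq_eq_abs x
      rw [hfun]
      rfl
    have h1 : traceNorm X = ∑ i, |lam i| := by
      have hT : traceNorm X = (cfc Real.sqrt (Xᴴ * X)).trace.re := by
        rw [(Matrix.posSemidef_conjTranspose_mul_self X).1.cfc_eq]
        rfl
      rw [hT, ← hS, conj_trace hX]
      simp [Complex.re_sum]
    rw [h1, conj_trace hX, conj_trace hX]
    simp only [Complex.re_sum, Complex.ofReal_re]
    rw [← Finset.sum_add_distrib]
    congr 1
    funext i
    rw [max_zero_add_max_neg_zero_eq_abs_self]
  · rw [conj_trace hX, conj_trace hX]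
    have : X.trace = ∑ i, ((lam i : ℝ) : ℂ) := by rw [hspec, conj_trace hX]
    rw [this]
    simp only [Complex.re_sum, Complex.ofReal_re]
    rw [← Finset.sum_sub_distrib]
    congr 1
    funext i
    simp [max_zero_sub_max_neg_zero_eq_self]

end Helpers



lemma gibbs {ι : Type*} [Fintype ι] (u w : ι → ℝ) (hu : ∀ i, 0 ≤ u i) (hw : ∀ i, 0 ≤ w i)
    (huw : ∀ i, u i ≠ 0 → w i ≠ 0) (hU : 0 < ∑ i, u i) :
    ∑ i, u i * Real.log (w i / u i) ≤ (∑ i, u i) * Real.log ((∑ i, w i) / (∑ i, u i)) := by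
  set U := ∑ i, u i with hUdef
  set W := ∑ i, w i with hWdef
  have hWpos : 0 < W := by
    obtain ⟨i, -, hi⟩ := Finset.exists_lt_of_sum_lt (by simpa using hU :
      ∑ i : ι, (0:ℝ) < ∑ i, u i)
    have hwi : 0 < w i := (hw i).lt_of_ne' (huw i (ne_of_gt hi))
    calc (0:ℝ) < w i := hwi
      _ ≤ W := Finset.single_le_sum (fun j _ => hw j) (Finset.mem_univ i)
  have hterm : ∀ i, u i * Real.log (w i / u i) ≤
      w i * (U / W) - u i + u i * Real.log (W / U) := by
    intro i
    rcases eq_or_lt_of_le (hu i) with h0 | hpos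
    · rw [← h0]
      simp only [zero_mul, sub_zero, add_zero]
      exact mul_nonneg (hw i) (div_nonneg hU.le hWpos.le)
    · have hwi : 0 < w i := (hw i).lt_of_ne' (huw i (ne_of_gt hpos))
      have key : w i / u i = (w i * U / (u i * W)) * (W / U) := by
        field_simp
      rw [key, Real.log_mul (by positivity) (by positivity), mul_add]
      have hlog : Real.log (w i * U / (u i * W)) ≤ w i * U / (u i * W) - 1 :=
        Real.log_le_sub_one_of_pos (by positivity)
      have : u i * Real.log (w i * U / (u i * W)) ≤ u i * (w i * U / (u i * W) - 1) :=
        mul_le_mul_of_nonneg_left hlog (le_of_lt hpos)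
      have heq : u i * (w i * U / (u i * W) - 1) = w i * (U / W) - u i := by
        field_simp
      linarith [this, heq ▸ this]
  calc ∑ i, u i * Real.log (w i / u i)
      ≤ ∑ i, (w i * (U / W) - u i + u i * Real.log (W / U)) :=
        Finset.sum_le_sum fun i _ => hterm i
    _ = W * (U / W) - U + U * Real.log (W / U) := by
        simp only [Finset.sum_add_distrib, Finset.sum_sub_distrib, ← Finset.sum_mul]
        rw [← hUdef, ← hWdef]
    _ = U * Real.log (W / U) := by
        field_simp
        ring

lemma term_subadd (x y V : ℝ) (hx : 0 ≤ x) (hy : 0 ≤ y) (hV0 : 0 ≤ V) :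
    x * Real.log (x / V) + y * Real.log (y / V) ≤ (x + y) * Real.log ((x + y) / V) := by
  rcases eq_or_lt_of_le hV0 with h0 | hV
  · simp [← h0, div_zero]
  · have h1 : x * Real.log (x / V) ≤ x * Real.log ((x + y) / V) := by
      rcases eq_or_lt_of_le hx with h0 | hxpos
      · rw [← h0]; simp
      · exact mul_le_mul_of_nonneg_left
          (Real.log_le_log (div_pos hxpos hV) (by apply div_le_div_of_nonneg_right <;> linarith))
          hx
    have h2 : y * Real.log (y / V) ≤ y * Real.log ((x + y) / V) := by
      rcases eq_or_lt_of_le hy with h0 | hypos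
      · rw [← h0]; simp
      · exact mul_le_mul_of_nonneg_left
          (Real.log_le_log (div_pos hypos hV) (by apply div_le_div_of_nonneg_right <;> linarith))
          hy
    nlinarith [h1, h2]

lemma term_split (x y V : ℝ) (hx : 0 ≤ x) (hy : 0 ≤ y)
    (hxV : V = 0 → x = 0) (hyV : V = 0 → y = 0) :
    (x + y) * Real.log ((x + y) / V) =
      x * Real.log (x / V) + y * Real.log (y / V) +
      x * Real.log ((x + y) / x) + y * Real.log ((x + y) / y) := by
  rcases eq_or_ne V 0 with h0 | hVne
  · simp [hxV h0, hyV h0]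
  rcases eq_or_lt_of_le hx with hx0 | hxpos
  · rw [← hx0]
    rcases eq_or_lt_of_le hy with hy0 | hypos
    · rw [← hy0]; simp
    · simp [div_self (ne_of_gt hypos)]
  rcases eq_or_lt_of_le hy with hy0 | hypos
  · rw [← hy0]
    simp [div_self (ne_of_gt hxpos)]
  have ht : 0 < x + y := by linarith
  rw [Real.log_div (ne_of_gt ht) hVne, Real.log_div (ne_of_gt hxpos) hVne,
    Real.log_div (ne_of_gt hypos) hVne, Real.log_div (ne_of_gt ht) (ne_of_gt hxpos),
    Real.log_div (ne_of_gt ht) (ne_of_gt hypos)]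
  ring

lemma key_classical {ι : Type*} [Fintype ι] (V p q a b : ι → ℝ) (d e : ℝ)
    (hd : 0 < d) (he : 0 < e)
    (hV : ∀ i, 0 ≤ V i) (hVd : ∑ i, V i = d)
    (hp : ∀ i, 0 ≤ p i) (hp1 : ∑ i, p i = 1) (hpV : ∀ i, p i ≤ V i)
    (hq : ∀ i, 0 ≤ q i) (hq1 : ∑ i, q i = 1)
    (ha : ∀ i, 0 ≤ a i) (ha1 : ∑ i, a i = e) (haV : ∀ i, a i ≤ e * V i)
    (hb : ∀ i, 0 ≤ b i) (hb1 : ∑ i, b i = e) (hbV : ∀ i, b i ≤ e * V i)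
    (hpb : ∀ i, p i + b i = q i + a i) :
    (-∑ i, p i * Real.log (p i / V i)) - (-∑ i, q i * Real.log (q i / V i)) ≤
      e * Real.log d + gFun e := by
  have hpV0 : ∀ i, V i = 0 → p i = 0 := fun i h =>
    le_antisymm (by rw [← h]; exact hpV i) (hp i)
  have hbV0 : ∀ i, V i = 0 → b i = 0 := fun i h =>
    le_antisymm (by have := hbV i; rw [h] at this; linarith) (hb i)
  have haV0 : ∀ i, V i = 0 → a i = 0 := fun i h =>
    le_antisymm (by have := haV i; rw [h] at this; linarith) (ha i)
  -- A : Sq + Sa ≤ St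
  have hA : (∑ i, q i * Real.log (q i / V i)) + (∑ i, a i * Real.log (a i / V i)) ≤
      ∑ i, (q i + a i) * Real.log ((q i + a i) / V i) := by
    rw [← Finset.sum_add_distrib]
    exact Finset.sum_le_sum fun i _ => term_subadd _ _ _ (hq i) (ha i) (hV i)
  -- B : St ≤ Sp + Sb + log(1+e) + e log((1+e)/e)
  have hsum_t : ∑ i, (p i + b i) = 1 + e := by
    rw [Finset.sum_add_distrib, hp1, hb1]
  have hg1 : ∑ i, p i * Real.log ((p i + b i) / p i) ≤ Real.log (1 + e) := by
    have := gibbs p (fun i => p i + b i) hp (fun i => by have := hp i; have := hb i; positivity)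
      (fun i hi h => by have h' : p i + b i = 0 := h; have h1 := hp i; have h2 := hb i; exact hi (by linarith))
      (by rw [hp1]; norm_num)
    rw [hp1, hsum_t] at this
    simpa using this
  have hg2 : ∑ i, b i * Real.log ((p i + b i) / b i) ≤ e * Real.log ((1 + e) / e) := by
    have := gibbs b (fun i => p i + b i) hb (fun i => by have := hp i; have := hb i; positivity)
      (fun i hi h => by have h' : p i + b i = 0 := h; have h1 := hp i; have h2 := hb i; exact hi (by linarith))
      (by rw [hb1]; exact he)
    rw [hb1, hsum_t] at this
    simpa using this
  have hB : (∑ i, (p i + b i) * Real.log ((p i + b i) / V i)) ≤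
      (∑ i, p i * Real.log (p i / V i)) + (∑ i, b i * Real.log (b i / V i)) +
      Real.log (1 + e) + e * Real.log ((1 + e) / e) := by
    have hid : ∀ i ∈ Finset.univ, (p i + b i) * Real.log ((p i + b i) / V i) =
        p i * Real.log (p i / V i) + b i * Real.log (b i / V i) +
        p i * Real.log ((p i + b i) / p i) + b i * Real.log ((p i + b i) / b i) :=
      fun i _ => term_split _ _ _ (hp i) (hb i) (hpV0 i) (hbV0 i)
    rw [Finset.sum_congr rfl hid]
    simp only [Finset.sum_add_distrib]
    linarith [hg1, hg2]
  -- C : Sb ≤ e log e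
  have hC : ∑ i, b i * Real.log (b i / V i) ≤ e * Real.log e := by
    have hterm : ∀ i, b i * Real.log (b i / V i) ≤ b i * Real.log e := by
      intro i
      rcases eq_or_lt_of_le (hb i) with h0 | hbpos
      · rw [← h0]; simp
      · have hVpos : 0 < V i := by
          rcases eq_or_lt_of_le (hV i) with h0 | h; · exact absurd (hbV0 i h0.symm) (ne_of_gt hbpos)
          · exact h
        have : b i / V i ≤ e := (div_le_iff₀ hVpos).mpr (by linarith [hbV i])
        exact mul_le_mul_of_nonneg_left (Real.log_le_log (div_pos hbpos hVpos) this) (hb i)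
    calc ∑ i, b i * Real.log (b i / V i) ≤ ∑ i, b i * Real.log e :=
          Finset.sum_le_sum fun i _ => hterm i
      _ = e * Real.log e := by rw [← Finset.sum_mul, hb1]
  -- D : -Sa ≤ e log (d/e)
  have hD : -(∑ i, a i * Real.log (a i / V i)) ≤ e * Real.log (d / e) := by
    have hterm : ∀ i, -(a i * Real.log (a i / V i)) = a i * Real.log (V i / a i) := by
      intro i
      rcases eq_or_lt_of_le (ha i) with h0 | hapos
      · rw [← h0]; simp
      · have hinv : Real.log (V i / a i) = -Real.log (a i / V i) := by
          rw [← Real.log_inv, inv_div]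
        rw [hinv]
        ring
    rw [← Finset.sum_neg_distrib, Finset.sum_congr rfl (fun i _ => hterm i)]
    have := gibbs a V ha hV (fun i hi h => hi (haV0 i h)) (by rw [ha1]; exact he)
    rw [ha1, hVd] at this
    exact this
  -- combine
  have hteq : (∑ i, (p i + b i) * Real.log ((p i + b i) / V i)) =
      ∑ i, (q i + a i) * Real.log ((q i + a i) / V i) := by
    apply Finset.sum_congr rfl
    intro i _
    rw [hpb i]
  have hlog1 : Real.log (d / e) = Real.log d - Real.log e :=
    Real.log_div (ne_of_gt hd) (ne_of_gt he)
  have hlog2 : Real.log ((1 + e) / e) = Real.log (1 + e) - Real.log e :=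
    Real.log_div (by positivity) (ne_of_gt he)
  rw [hlog1] at hD
  rw [hlog2] at hB
  unfold gFun
  nlinarith [hA, hB, hC, hD, hteq]

lemma gFun_nonneg {x : ℝ} (hx : 0 ≤ x) : 0 ≤ gFun x := by
  rcases eq_or_lt_of_le hx with h0 | hpos
  · simp [gFun, ← h0]
  · unfold gFun
    have h1 : x * Real.log x ≤ x * Real.log (1 + x) :=
      mul_le_mul_of_nonneg_left (Real.log_le_log hpos (by linarith)) hx
    have h2 : 0 ≤ Real.log (1 + x) := Real.log_nonneg (by linarith)
    rw [add_mul, one_mul]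
    linarith

lemma gFun_mono {x y : ℝ} (hx : 0 ≤ x) (hxy : x ≤ y) : gFun x ≤ gFun y := by
  have hderiv : ∀ t ∈ Set.Ioi (0:ℝ), HasDerivAt gFun (Real.log (1 + t) - Real.log t) t := by
    intro t ht
    have ht' : (0:ℝ) < t := ht
    have h1 : HasDerivAt (fun s : ℝ => s * Real.log s) (Real.log t + 1) t :=
      Real.hasDerivAt_mul_log (ne_of_gt ht')
    have h2 : HasDerivAt (fun s : ℝ => (1 + s)) 1 t := (hasDerivAt_id t).const_add 1
    have h3 : HasDerivAt (fun s : ℝ => (1 + s) * Real.log (1 + s))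
        ((Real.log (1 + t) + 1) * 1) t := by
      have hout : HasDerivAt (fun u : ℝ => u * Real.log u) (Real.log (1 + t) + 1) (1 + t) :=
        Real.hasDerivAt_mul_log (by positivity)
      exact hout.comp t h2
    have h4 : HasDerivAt gFun (-(Real.log t + 1) + (Real.log (1 + t) + 1) * 1) t :=
      (h1.neg).add h3
    convert h4 using 1
    ring
  rcases eq_or_lt_of_le hx with h0 | hpos
  · rw [← h0]
    have : gFun 0 = 0 := by simp [gFun]
    rw [this]
    exact gFun_nonneg (le_trans hx hxy)
  · have hmono : MonotoneOn gFun (Set.Ici x) := by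
      apply monotoneOn_of_deriv_nonneg (convex_Ici x)
      · intro t ht
        exact ((hderiv t (lt_of_lt_of_le hpos ht)).continuousAt).continuousWithinAt
      · intro t ht
        rw [interior_Ici] at ht
        exact ((hderiv t (lt_trans hpos ht)).differentiableAt).differentiableWithinAt
      · intro t ht
        rw [interior_Ici] at ht
        have hpt : (0:ℝ) < t := lt_trans hpos ht
        rw [(hderiv t hpt).deriv]
        have := Real.log_le_log hpt (by linarith : t ≤ 1 + t)
        linarith
    exact hmono Set.self_mem_Ici hxy hxy


theorem obsEntropy_continuity {d : ℕ} {ι : Type*} [Fintype ι]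
    (M : ι → Matrix (Fin d) (Fin d) ℂ) (hM : IsPOVM M)
    (ρ σ : Matrix (Fin d) (Fin d) ℂ) (hρ : IsState ρ) (hσ : IsState σ)
    (ε : ℝ) (hε : (1/2) * traceNorm (ρ - σ) ≤ ε) :
    |obsEntropy M ρ - obsEntropy M σ| ≤ gFun ε + ε * Real.log d := by
  classical
  have hd1 : 1 ≤ d := by
    by_contra h
    push_neg at h
    have hd0 : d = 0 := Nat.lt_one_iff.mp h
    subst hd0
    have := hρ.2
    simp [Matrix.trace, Finset.univ_eq_empty] at this
  have hdR : (1:ℝ) ≤ (d:ℝ) := by exact_mod_cast hd1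
  have hdpos : (0:ℝ) < (d:ℝ) := by linarith
  have hX : (ρ - σ).IsHermitian := hρ.1.1.sub hσ.1.1
  obtain ⟨P, N, hP, hN, hPN, htrS, htrD⟩ := jordan_decomp hX
  have hXtr : (ρ - σ).trace = 0 := by rw [Matrix.trace_sub, hρ.2, hσ.2, sub_self]
  set e := (1/2) * traceNorm (ρ - σ) with he_def
  have hXtr' : (ρ - σ).trace.re = 0 := by rw [hXtr]; rfl
  have hPe : P.trace.re = e := by rw [hXtr'] at htrD; rw [he_def]; linarith
  have hNe : N.trace.re = e := by rw [hXtr'] at htrD; rw [he_def]; linarith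
  have he0 : 0 ≤ e := by rw [← hPe]; exact psd_trace_nonneg hP
  have heε : e ≤ ε := hε
  have hε0 : 0 ≤ ε := le_trans he0 heε
  -- distributions
  set V : ι → ℝ := fun i => (M i).trace.re with hVdef
  set p : ι → ℝ := fun i => (M i * ρ).trace.re with hpdef
  set q : ι → ℝ := fun i => (M i * σ).trace.re with hqdef
  set a : ι → ℝ := fun i => (M i * P).trace.re with hadef
  set b : ι → ℝ := fun i => (M i * N).trace.re with hbdef
  have hV : ∀ i, 0 ≤ V i := fun i => psd_trace_nonneg (hM.1 i)
  have hsum_gen : ∀ (Z : Matrix (Fin d) (Fin d) ℂ), ∑ i, (M i * Z).trace = Z.trace := by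
    intro Z
    rw [← Matrix.trace_sum, ← Matrix.sum_mul, hM.2, Matrix.one_mul]
  have hVd : ∑ i, V i = (d:ℝ) := by
    have h1 : ∑ i, (M i).trace = (1 : Matrix (Fin d) (Fin d) ℂ).trace := by
      rw [← Matrix.trace_sum, hM.2]
    have h2 : (1 : Matrix (Fin d) (Fin d) ℂ).trace = (d:ℂ) := by
      rw [Matrix.trace_one]; simp
    calc ∑ i, V i = (∑ i, (M i).trace).re := (Complex.re_sum _ _).symm
      _ = (d:ℝ) := by rw [h1, h2]; simp
  have htr_re : ∀ (Z : Matrix (Fin d) (Fin d) ℂ), ∑ i, (M i * Z).trace.re = Z.trace.re := by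
    intro Z
    rw [← Complex.re_sum, hsum_gen Z]
  have hρre : ρ.trace.re = 1 := by rw [hρ.2]; rfl
  have hσre : σ.trace.re = 1 := by rw [hσ.2]; rfl
  have hp0 : ∀ i, 0 ≤ p i := fun i => psd_trace_mul_nonneg (hM.1 i) hρ.1
  have hq0 : ∀ i, 0 ≤ q i := fun i => psd_trace_mul_nonneg (hM.1 i) hσ.1
  have ha0 : ∀ i, 0 ≤ a i := fun i => psd_trace_mul_nonneg (hM.1 i) hP
  have hb0 : ∀ i, 0 ≤ b i := fun i => psd_trace_mul_nonneg (hM.1 i) hN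
  have hp1 : ∑ i, p i = 1 := by rw [hpdef]; simpa [hρre] using htr_re ρ
  have hq1 : ∑ i, q i = 1 := by rw [hqdef]; simpa [hσre] using htr_re σ
  have ha1 : ∑ i, a i = e := by rw [hadef]; simpa [hPe] using htr_re P
  have hb1 : ∑ i, b i = e := by rw [hbdef]; simpa [hNe] using htr_re N
  have hpV : ∀ i, p i ≤ V i := by
    intro i
    have := psd_trace_mul_le (hM.1 i) hρ.1
    rw [hρre, mul_one] at this
    exact this
  have hqV : ∀ i, q i ≤ V i := by
    intro i
    have := psd_trace_mul_le (hM.1 i) hσ.1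
    rw [hσre, mul_one] at this
    exact this
  have haV : ∀ i, a i ≤ e * V i := by
    intro i
    have := psd_trace_mul_le (hM.1 i) hP
    rw [hPe] at this
    linarith [this]
  have hbV : ∀ i, b i ≤ e * V i := by
    intro i
    have := psd_trace_mul_le (hM.1 i) hN
    rw [hNe] at this
    linarith [this]
  have hrear : ρ + N = σ + P := by
    have h := sub_eq_sub_iff_add_eq_add.mp hPN
    linear_combination (norm := abel) h
  have hpb : ∀ i, p i + b i = q i + a i := by
    intro i
    have h1 : M i * ρ + M i * N = M i * σ + M i * P := by
      rw [← Matrix.mul_add, ← Matrix.mul_add, hrear]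
    have h2 := congrArg (fun Z => Z.trace.re) h1
    simpa [Matrix.trace_add, Complex.add_re] using h2
  have hobs : obsEntropy M ρ - obsEntropy M σ =
      (-∑ i, p i * Real.log (p i / V i)) - (-∑ i, q i * Real.log (q i / V i)) := rfl
  have hobs' : obsEntropy M σ - obsEntropy M ρ =
      (-∑ i, q i * Real.log (q i / V i)) - (-∑ i, p i * Real.log (p i / V i)) := rfl
  have hbound : |obsEntropy M ρ - obsEntropy M σ| ≤ e * Real.log d + gFun e := by
    rcases eq_or_lt_of_le he0 with he0' | hepos
    · have hae : ∀ i, a i = 0 := fun i =>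
        le_antisymm (by have := haV i; rw [← he0'] at this; simpa using this) (ha0 i)
      have hbe : ∀ i, b i = 0 := fun i =>
        le_antisymm (by have := hbV i; rw [← he0'] at this; simpa using this) (hb0 i)
      have hpq : ∀ i, p i = q i := by
        intro i
        have := hpb i
        rw [hae i, hbe i] at this
        linarith
      have : obsEntropy M ρ = obsEntropy M σ := by
        rw [show obsEntropy M ρ = -∑ i, p i * Real.log (p i / V i) from rfl,
          show obsEntropy M σ = -∑ i, q i * Real.log (q i / V i) from rfl]
        congr 1
        exact Finset.sum_congr rfl fun i _ => by rw [hpq i]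
      rw [this, sub_self, abs_zero, ← he0']
      simp [gFun]
    · have h1 := key_classical V p q a b (d:ℝ) e hdpos hepos hV hVd hp0 hp1 hpV hq0 hq1
        ha0 ha1 haV hb0 hb1 hbV hpb
      have h2 := key_classical V q p b a (d:ℝ) e hdpos hepos hV hVd hq0 hq1 hqV hp0 hp1
        hb0 hb1 hbV ha0 ha1 haV (fun i => (hpb i).symm)
      rw [← hobs] at h1
      rw [← hobs'] at h2
      rw [abs_sub_le_iff]
      exact ⟨h1, h2⟩
  have hmono1 : gFun e ≤ gFun ε := gFun_mono he0 heε
  have hmono2 : e * Real.log d ≤ ε * Real.log d :=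
    mul_le_mul_of_nonneg_right heε (Real.log_nonneg hdR)
  linarith [hbound, hmono1, hmono2]
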